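/- Let X be an infinite subset of Zar(F) such that A(X) = ⋂_{V∈X} V is a local ring and J(lim X) = ⋂_{U∈lim X} 𝔪_U is nonzero. If R is a completely integrally closed domain with A(X) ⊆ R ⊆ F, then A(lim X) = ⋂_{U∈lim X} U ⊆ R. In particular, if A(X) itself is completely integrally closed, then A(X) = A(lim X). -/

import Mathlib

open Set

/-- A subring `V` of a field `F` is a valuation ring of `F` (with quotient field `F`). -/
def IsValSubring (F : Type*) [Field F] (V : Subring F) : Prop :=
  ∀ t : F, t ≠ 0 → t ∈ V ∨ t⁻¹ ∈ V

/-- The Zariski-Riemann space of the field `F`: the set of valuation rings of `F`. -/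
def Zar (F : Type*) [Field F] : Type _ := {V : Subring F // IsValSubring F V}

/-- The patch (constructible) topology on `Zar F`, generated by the sets
`{V : x ∈ V}` and `{V : y ∉ V}` for `x, y ∈ F`. -/
instance Zar.patchTopology (F : Type*) [Field F] : TopologicalSpace (Zar F) :=
  TopologicalSpace.generateFrom
    ({S | ∃ x : F, S = {V : Zar F | x ∈ V.1}} ∪ {S | ∃ y : F, S = {V : Zar F | y ∉ V.1}})

variable {F : Type*} [Field F]

/-- The maximal ideal of a valuation ring of `F`, as a subset of `F`. -/
def mIdeal (V : Zar F) : Set F := {x : F | x ∈ V.1 ∧ (x = 0 ∨ x⁻¹ ∉ V.1)}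

/-- `A(X)`: the intersection of the valuation rings in `X`, as a subset of `F`. -/
def aSet (X : Set (Zar F)) : Set F := ⋂ V ∈ X, ((V : Zar F).1 : Set F)

/-- `A(X)` as a subring of `F`. -/
def ASub (X : Set (Zar F)) : Subring F := ⨅ V ∈ X, (V : Zar F).1

/-- `J(X)`: the intersection of the maximal ideals of the valuation rings in `X`. -/
def jSet (X : Set (Zar F)) : Set F := ⋂ V ∈ X, mIdeal V

/-- The set of limit points of `X` in the patch topology of `Zar F`. -/
def limPts (X : Set (Zar F)) : Set (Zar F) :=
  {V : Zar F | ∀ U : Set (Zar F), IsOpen U → V ∈ U → ∃ W ∈ X, W ≠ V ∧ W ∈ U}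


/-- A subring `A` of `F` is completely integrally closed: every element of `F`
almost integral over `A` belongs to `A`. -/
def IsCIC (A : Subring F) : Prop :=
  ∀ t : F, (∃ a : F, a ∈ A ∧ a ≠ 0 ∧ ∀ n : ℕ, 0 < n → a * t ^ n ∈ A) → t ∈ A


namespace ZarProof

lemma mIdeal_mem {V : Zar F} {x : F} (h : x ∈ mIdeal V) : x ∈ V.1 := h.1

lemma mIdeal_inv_not_mem {V : Zar F} {x : F} (h : x ∈ mIdeal V) (hx : x ≠ 0) : x⁻¹ ∉ V.1 :=
  h.2.resolve_left hx

lemma mIdeal_ne_neg_one {V : Zar F} {x : F} (h : x ∈ mIdeal V) : x ≠ -1 := by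
  rintro rfl
  have h1 : (-1 : F) ≠ 0 := by norm_num
  exact mIdeal_inv_not_mem h h1 (by rw [inv_neg_one]; exact V.1.neg_mem V.1.one_mem)

lemma mIdeal_one_add_ne_zero {V : Zar F} {x : F} (h : x ∈ mIdeal V) : 1 + x ≠ 0 := by
  intro h0
  exact mIdeal_ne_neg_one h (by linear_combination h0)

lemma mIdeal_mul {V : Zar F} {x y : F} (hx : x ∈ V.1) (hy : y ∈ mIdeal V) :
    x * y ∈ mIdeal V := by
  refine ⟨V.1.mul_mem hx hy.1, ?_⟩
  by_cases h0 : x * y = 0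
  · exact Or.inl h0
  · refine Or.inr fun hinv => ?_
    have hy0 : y ≠ 0 := fun h => h0 (by simp [h])
    exact mIdeal_inv_not_mem hy hy0 (by
      have : y⁻¹ = (x * y)⁻¹ * x := by
        field_simp
        exact (div_self (fun h => h0 (by simp [h]))).symm
      rw [this]
      exact V.1.mul_mem hinv hx)

lemma mIdeal_add {V : Zar F} {x y : F} (hx : x ∈ mIdeal V) (hy : y ∈ mIdeal V) :
    x + y ∈ mIdeal V := by
  refine ⟨V.1.add_mem hx.1 hy.1, ?_⟩
  by_cases h0 : x + y = 0
  · exact Or.inl h0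
  refine Or.inr fun hinv => ?_
  by_cases hx0 : x = 0
  · exact mIdeal_inv_not_mem hy (fun h => h0 (by simp [hx0, h])) (by
      rwa [hx0, zero_add] at hinv)
  by_cases hy0 : y = 0
  · exact mIdeal_inv_not_mem hx (fun h => h0 (by simp [hy0, h])) (by
      rwa [hy0, add_zero] at hinv)
  rcases V.2 (y * x⁻¹) (by simp [hx0, hy0]) with h | h
  · refine mIdeal_inv_not_mem hx hx0 ?_
    have hid : x⁻¹ = (x + y)⁻¹ * (1 + y * x⁻¹) := by
      field_simp
    rw [hid]
    exact V.1.mul_mem hinv (V.1.add_mem V.1.one_mem h)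
  · rw [mul_inv, inv_inv] at h
    refine mIdeal_inv_not_mem hy hy0 ?_
    have hid : y⁻¹ = (x + y)⁻¹ * (1 + x * y⁻¹) := by
      field_simp; ring
    rw [hid]
    exact V.1.mul_mem hinv (V.1.add_mem V.1.one_mem (by rwa [mul_comm] at h))

lemma mIdeal_one_add_unit {V : Zar F} {x : F} (h : x ∈ mIdeal V) :
    (1 + x)⁻¹ ∈ V.1 := by
  have hne := mIdeal_one_add_ne_zero h
  by_contra hbad
  have h1 : (1 + x) ∈ mIdeal V := ⟨V.1.add_mem V.1.one_mem h.1, Or.inr hbad⟩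
  have : (1 : F) ∈ mIdeal V := by
    have := mIdeal_add h1 (mIdeal_mul (V.1.neg_mem V.1.one_mem) h)
    simpa using this
  exact mIdeal_inv_not_mem this one_ne_zero (by simpa using V.1.one_mem)

lemma inv_mem_mIdeal_of_not_mem {V : Zar F} {x : F} (hx : x ≠ 0) (h : x ∉ V.1) :
    x⁻¹ ∈ mIdeal V := by
  rcases V.2 x hx with h' | h'
  · exact absurd h' h
  · exact ⟨h', Or.inr (by rwa [inv_inv])⟩

lemma not_mem_of_inv_mem_mIdeal {V : Zar F} {x : F} (hx : x ≠ 0) (h : x⁻¹ ∈ mIdeal V) :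
    x ∉ V.1 := by
  have := mIdeal_inv_not_mem h (inv_ne_zero hx)
  rwa [inv_inv] at this


lemma isOpen_mem_set (x : F) : IsOpen {V : Zar F | x ∈ V.1} :=
  TopologicalSpace.GenerateOpen.basic _ (Or.inl ⟨x, rfl⟩)

lemma isOpen_not_mem_set (y : F) : IsOpen {V : Zar F | y ∉ V.1} :=
  TopologicalSpace.GenerateOpen.basic _ (Or.inr ⟨y, rfl⟩)

/-- The limit valuation ring along an ultrafilter. -/
def uRing (𝒰 : Ultrafilter (Zar F)) : Subring F where
  carrier := {x : F | {V : Zar F | x ∈ V.1} ∈ 𝒰}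
  zero_mem' := Filter.mem_of_superset Filter.univ_mem (fun V _ => V.1.zero_mem)
  one_mem' := Filter.mem_of_superset Filter.univ_mem (fun V _ => V.1.one_mem)
  add_mem' := by
    intro a b ha hb
    filter_upwards [ha, hb] with V h1 h2
    exact V.1.add_mem h1 h2
  mul_mem' := by
    intro a b ha hb
    filter_upwards [ha, hb] with V h1 h2
    exact V.1.mul_mem h1 h2
  neg_mem' := by
    intro a ha
    filter_upwards [ha] with V h1
    exact V.1.neg_mem h1

def uZar (𝒰 : Ultrafilter (Zar F)) : Zar F :=
  ⟨uRing 𝒰, fun t ht => by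
    have h : {V : Zar F | t ∈ V.1} ∪ {V : Zar F | t⁻¹ ∈ V.1} ∈ 𝒰 :=
      Filter.mem_of_superset Filter.univ_mem (fun V _ => V.2 t ht)
    exact Ultrafilter.union_mem_iff.mp h⟩

lemma uZar_conv (𝒰 : Ultrafilter (Zar F)) {U : Set (Zar F)} (hU : IsOpen U)
    (hV : uZar 𝒰 ∈ U) : U ∈ 𝒰 := by
  have hU' : TopologicalSpace.GenerateOpen
      ({S | ∃ x : F, S = {V : Zar F | x ∈ V.1}} ∪ {S | ∃ y : F, S = {V : Zar F | y ∉ V.1}}) U := hU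
  clear hU
  induction hU' with
  | @basic S hS =>
    rcases hS with ⟨x, rfl⟩ | ⟨y, rfl⟩
    · exact hV
    · have hnot : {V : Zar F | y ∈ V.1} ∉ 𝒰 := hV
      have hc := Ultrafilter.compl_mem_iff_notMem.mpr hnot
      exact hc
  | univ => exact Filter.univ_mem
  | inter s t _ _ ihs iht => exact Filter.inter_mem (ihs hV.1) (iht hV.2)
  | sUnion S _ ih =>
    obtain ⟨s, hs, hVs⟩ := hV
    exact Filter.mem_of_superset (ih s hs hVs) (Set.subset_sUnion_of_mem hs)

lemma finite_inter_closed (X : Set (Zar F)) {C : Set (Zar F)} (hC : IsClosed C)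
    (hd : ∀ V ∈ limPts X, V ∉ C) : (X ∩ C).Finite := by
  by_contra hfin
  have hinf : (X ∩ C).Infinite := hfin
  haveI : (Filter.cofinite ⊓ Filter.principal (X ∩ C)).NeBot :=
    hinf.cofinite_inf_principal_neBot
  set 𝒰 := Ultrafilter.of (Filter.cofinite ⊓ Filter.principal (X ∩ C)) with h𝒰
  have hle : (𝒰 : Filter (Zar F)) ≤ Filter.cofinite ⊓ Filter.principal (X ∩ C) :=
    Ultrafilter.of_le _
  have hmem : X ∩ C ∈ 𝒰 := hle (Filter.mem_inf_of_right (Filter.mem_principal_self _))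
  have hcof : ∀ s : Set (Zar F), s.Finite → sᶜ ∈ 𝒰 := fun s hs =>
    hle (Filter.mem_inf_of_left hs.compl_mem_cofinite)
  have hCU : uZar 𝒰 ∈ C := by
    by_contra hnc
    have : Cᶜ ∈ 𝒰 := uZar_conv 𝒰 hC.isOpen_compl hnc
    have hem := Filter.inter_mem hmem this
    obtain ⟨W, ⟨_, hWC⟩, hWc⟩ := Ultrafilter.nonempty_of_mem hem
    exact hWc hWC
  have hlim : uZar 𝒰 ∈ limPts X := by
    intro U hUo hVU
    have h1 : U ∈ 𝒰 := uZar_conv 𝒰 hUo hVU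
    have h2 : ({uZar 𝒰} : Set (Zar F))ᶜ ∈ 𝒰 := hcof _ (Set.finite_singleton _)
    obtain ⟨W, ⟨⟨hWX, _⟩, hWU⟩, hWne⟩ :=
      Ultrafilter.nonempty_of_mem (Filter.inter_mem (Filter.inter_mem hmem h1) h2)
    exact ⟨W, hWX, by simpa using hWne, hWU⟩
  exact hd _ hlim hCU

lemma limPts_nonempty {X : Set (Zar F)} (hX : X.Infinite) : (limPts X).Nonempty := by
  by_contra h
  rw [Set.not_nonempty_iff_eq_empty] at h
  have := finite_inter_closed X isClosed_univ (by simp [h])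
  rw [Set.inter_univ] at this
  exact hX this


/-- The iteration `j ↦ j^2/(1+j)`. -/
noncomputable def jseq (j : F) : ℕ → F
  | 0 => j
  | (k + 1) => (jseq j k) ^ 2 / (1 + jseq j k)

lemma step_mem_mIdeal {V : Zar F} {x : F} (hx : x ∈ mIdeal V) :
    x ^ 2 / (1 + x) ∈ mIdeal V := by
  have h1 : (1 + x)⁻¹ ∈ V.1 := mIdeal_one_add_unit hx
  have hne : 1 + x ≠ 0 := mIdeal_one_add_ne_zero hx
  have hid : x ^ 2 / (1 + x) = (x * (1 + x)⁻¹) * x := by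
    field_simp
  rw [hid]
  exact mIdeal_mul (V.1.mul_mem hx.1 h1) hx

lemma step_ne_zero {x : F} (hx : x ≠ 0) (h1 : 1 + x ≠ 0) : x ^ 2 / (1 + x) ≠ 0 :=
  div_ne_zero (pow_ne_zero _ hx) h1

lemma step_inv_mem_mIdeal {V : Zar F} {x : F} (hx : x⁻¹ ∈ mIdeal V) (hx0 : x ≠ 0)
    (h1 : 1 + x ≠ 0) : (x ^ 2 / (1 + x))⁻¹ ∈ mIdeal V := by
  have hid : (x ^ 2 / (1 + x))⁻¹ = x⁻¹ * x⁻¹ + x⁻¹ := by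
    rw [div_eq_mul_inv, mul_inv, inv_inv]
    field_simp
  rw [hid]
  exact mIdeal_add (mIdeal_mul hx.1 hx) hx

lemma step_bad {V : Zar F} {x : F} (hx : x ∈ V.1) (hinv : x⁻¹ ∈ V.1)
    (hbad : (1 + x)⁻¹ ∉ V.1) (hx0 : x ≠ 0) (h1 : 1 + x ≠ 0) :
    (x ^ 2 / (1 + x))⁻¹ ∈ mIdeal V := by
  have hm : (1 + x) ∈ mIdeal V := ⟨V.1.add_mem V.1.one_mem hx, Or.inr hbad⟩
  have hid : (x ^ 2 / (1 + x))⁻¹ = (x⁻¹ * x⁻¹) * (1 + x) := by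
    rw [div_eq_mul_inv, mul_inv, inv_inv]
    field_simp
  rw [hid]
  exact mIdeal_mul (V.1.mul_mem hinv hinv) hm

lemma mem_jSet {Y : Set (Zar F)} {x : F} : x ∈ jSet Y ↔ ∀ U ∈ Y, x ∈ mIdeal U := by
  simp [jSet]

lemma mem_aSet {Y : Set (Zar F)} {x : F} : x ∈ aSet Y ↔ ∀ U ∈ Y, x ∈ U.1 := by
  simp [aSet]

lemma mem_ASub {X : Set (Zar F)} {x : F} : x ∈ ASub X ↔ ∀ V ∈ X, x ∈ V.1 := by
  simp [ASub, Subring.mem_iInf]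


lemma jset_mem_all (X : Set (Zar F)) (hX : X.Infinite) (hloc : IsLocalRing (ASub X))
    {j : F} (hj : j ∈ jSet (limPts X)) (hj0 : j ≠ 0) {V0 : Zar F} (hV0 : V0 ∈ X) :
    j ∈ V0.1 := by
  by_contra hjV0
  obtain ⟨U0, hU0⟩ := limPts_nonempty hX
  rw [mem_jSet] at hj
  -- invariant: jseq stays in jSet (limPts X) and nonzero
  have I1 : ∀ k, (∀ U ∈ limPts X, jseq j k ∈ mIdeal U) ∧ jseq j k ≠ 0 := by
    intro k
    induction k with
    | zero => exact ⟨hj, hj0⟩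
    | succ n ih =>
      refine ⟨fun U hU => step_mem_mIdeal (ih.1 U hU), ?_⟩
      exact step_ne_zero ih.2 (mIdeal_one_add_ne_zero (ih.1 U0 hU0))
  have hne1 : ∀ k, 1 + jseq j k ≠ 0 := fun k =>
    mIdeal_one_add_ne_zero ((I1 k).1 U0 hU0)
  -- the finite exceptional set
  set C : Set (Zar F) := {V : Zar F | j ∉ mIdeal V} with hCdef
  have hCclosed : IsClosed C := by
    rw [← isOpen_compl_iff]
    have : Cᶜ = {V : Zar F | j ∈ V.1} ∩ {V : Zar F | j⁻¹ ∉ V.1} := by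
      ext V
      simp only [hCdef, Set.mem_compl_iff, Set.mem_setOf_eq, Set.mem_inter_iff, not_not]
      constructor
      · intro h
        exact ⟨h.1, h.2.resolve_left hj0⟩
      · intro h
        exact ⟨h.1, Or.inr h.2⟩
    rw [this]
    exact (isOpen_mem_set j).inter (isOpen_not_mem_set j⁻¹)
  have hZfin : (X ∩ C).Finite :=
    finite_inter_closed X hCclosed (fun U hU hUC => hUC (hj U hU))
  -- invariant at good points
  have I2 : ∀ V : Zar F, j ∈ mIdeal V → ∀ k, jseq j k ∈ mIdeal V := by
    intro V hV k
    induction k with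
    | zero => exact hV
    | succ n ih => exact step_mem_mIdeal ih
  -- invariant: once the inverse is in the maximal ideal, it stays there
  have I3 : ∀ (V : Zar F) (k l : ℕ), k ≤ l → (jseq j k)⁻¹ ∈ mIdeal V →
      (jseq j l)⁻¹ ∈ mIdeal V := by
    intro V k l hkl hk
    induction l with
    | zero =>
      have : k = 0 := Nat.le_zero.mp hkl
      rwa [this] at hk
    | succ n ih =>
      rcases Nat.lt_or_ge k (n + 1) with h | h
      · exact step_inv_mem_mIdeal (ih (Nat.lt_succ_iff.mp h)) (I1 n).2 (hne1 n)
      · have : k = n + 1 := le_antisymm hkl h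
        rwa [this] at hk
  -- inverse at V0
  have IV0 : ∀ k, (jseq j k)⁻¹ ∈ mIdeal V0 :=
    fun k => I3 V0 0 k (Nat.zero_le _) (inv_mem_mIdeal_of_not_mem hj0 hjV0)
  -- the bad sets
  set B : ℕ → Set (Zar F) := fun k =>
    {V : Zar F | V ∈ X ∧ jseq j k ∈ V.1 ∧ (jseq j k)⁻¹ ∈ V.1 ∧ (1 + jseq j k)⁻¹ ∉ V.1}
    with hBdef
  have hBZ : ∀ k, B k ⊆ X ∩ C := by
    intro k V hV
    refine ⟨hV.1, fun hjm => ?_⟩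
    exact mIdeal_inv_not_mem (I2 V hjm k) (I1 k).2 hV.2.2.1
  have hBdisj : ∀ k l, k < l → ∀ V, V ∈ B k → V ∉ B l := by
    intro k l hkl V hVk hVl
    have hstep : (jseq j (k + 1))⁻¹ ∈ mIdeal V :=
      step_bad hVk.2.1 hVk.2.2.1 hVk.2.2.2 (I1 k).2 (hne1 k)
    have hl : (jseq j l)⁻¹ ∈ mIdeal V := I3 V (k + 1) l hkl hstep
    exact not_mem_of_inv_mem_mIdeal (I1 l).2 hl hVl.2.1
  -- some bad set is empty
  have hBempty : ∃ k, B k = ∅ := by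
    by_contra hB
    push_neg at hB
    choose f hf using hB
    have hinj : Function.Injective f := by
      intro k l hkl
      by_contra hne
      rcases Nat.lt_or_ge k l with h | h
      · exact hBdisj k l h (f k) (hf k) (hkl ▸ hf l)
      · exact hBdisj l k (lt_of_le_of_ne h (Ne.symm hne)) (f l) (hf l) (hkl ▸ hf k)
    exact absurd hZfin (Set.infinite_of_injective_forall_mem hinj (fun k => hBZ k (hf k)))
  obtain ⟨k, hk⟩ := hBempty
  -- a witness W where j is in the maximal ideal
  obtain ⟨W, hWX, hWC⟩ : ∃ W ∈ X, W ∉ C := by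
    obtain ⟨W, hW⟩ := (hX.diff hZfin).nonempty
    exact ⟨W, hW.1, fun hWC => hW.2 ⟨hW.1, hWC⟩⟩
  have hjW : j ∈ mIdeal W := not_not.mp hWC
  -- set up the two nonunits
  set m : F := jseq j k with hmdef
  have hm0 : m ≠ 0 := (I1 k).2
  have hm1 : 1 + m ≠ 0 := hne1 k
  have hmV0 : m⁻¹ ∈ mIdeal V0 := IV0 k
  have hmW : m ∈ mIdeal W := I2 W hjW k
  set x : F := (1 + m)⁻¹ with hxdef
  set y : F := m * (1 + m)⁻¹ with hydef
  have hxy : x + y = 1 := by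
    rw [hxdef, hydef]
    field_simp
  -- x and y lie in every V ∈ X
  have hmemA : ∀ V ∈ X, x ∈ V.1 ∧ y ∈ V.1 := by
    intro V hV
    by_cases h1 : m ∈ V.1
    · by_cases h2 : m⁻¹ ∈ V.1
      · have hx : (1 + m)⁻¹ ∈ V.1 := by
          by_contra hbad
          have : V ∈ B k := ⟨hV, h1, h2, hbad⟩
          rw [hk] at this
          exact this
        exact ⟨hx, V.1.mul_mem h1 hx⟩
      · have hmm : m ∈ mIdeal V := ⟨h1, Or.inr h2⟩
        have hx := mIdeal_one_add_unit hmm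
        exact ⟨hx, V.1.mul_mem h1 hx⟩
    · have hminv : m⁻¹ ∈ mIdeal V := inv_mem_mIdeal_of_not_mem hm0 h1
      have hiu : (1 + m⁻¹)⁻¹ ∈ V.1 := mIdeal_one_add_unit hminv
      have hne' : 1 + m⁻¹ ≠ 0 := mIdeal_one_add_ne_zero hminv
      have hxeq : x = m⁻¹ * (1 + m⁻¹)⁻¹ := by
        rw [hxdef, ← mul_inv]
        congr 1
        field_simp
        ring
      have hxV : x ∈ V.1 := hxeq ▸ V.1.mul_mem hminv.1 hiu
      have hyV : y ∈ V.1 := by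
        have : y = 1 - x := by rw [← hxy]; ring
        rw [this]
        exact V.1.sub_mem V.1.one_mem hxV
      exact ⟨hxV, hyV⟩
  -- x is a nonunit witnessed at V0
  have hxm : x ∈ mIdeal V0 := by
    have hiu : (1 + m⁻¹)⁻¹ ∈ V0.1 := mIdeal_one_add_unit hmV0
    have hne' : 1 + m⁻¹ ≠ 0 := mIdeal_one_add_ne_zero hmV0
    have hxeq : x = (1 + m⁻¹)⁻¹ * m⁻¹ := by
      rw [hxdef, ← mul_inv]
      congr 1
      field_simp
      ring
    rw [hxeq]
    exact mIdeal_mul hiu hmV0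
  have hym : y ∈ mIdeal W := by
    have : y = (1 + m)⁻¹ * m := by rw [hydef]; ring
    rw [this]
    exact mIdeal_mul (mIdeal_one_add_unit hmW) hmW
  have hx0 : x ≠ 0 := inv_ne_zero hm1
  have hy0 : y ≠ 0 := mul_ne_zero hm0 (inv_ne_zero hm1)
  -- now contradict locality
  have hxA : x ∈ ASub X := mem_ASub.mpr (fun V hV => (hmemA V hV).1)
  have hyA : y ∈ ASub X := mem_ASub.mpr (fun V hV => (hmemA V hV).2)
  haveI := hloc
  have hone : (⟨x, hxA⟩ : ASub X) + ⟨y, hyA⟩ = 1 := by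
    ext
    exact hxy
  have hAle : ∀ V ∈ X, ∀ z : F, z ∈ ASub X → z ∈ V.1 := fun V hV z hz =>
    mem_ASub.mp hz V hV
  rcases IsLocalRing.isUnit_or_isUnit_of_add_one hone with h | h
  · obtain ⟨c, hc⟩ := h.exists_right_inv
    have hcF : x * (c : F) = 1 := by
      have := congrArg (Subtype.val) hc
      exact this
    have : x⁻¹ ∈ V0.1 := by
      rw [inv_eq_of_mul_eq_one_right hcF]
      exact hAle V0 hV0 _ c.2
    exact mIdeal_inv_not_mem hxm hx0 this
  · obtain ⟨c, hc⟩ := h.exists_right_inv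
    have hcF : y * (c : F) = 1 := by
      have := congrArg (Subtype.val) hc
      exact this
    have : y⁻¹ ∈ W.1 := by
      rw [inv_eq_of_mul_eq_one_right hcF]
      exact hAle W hWX _ c.2
    exact mIdeal_inv_not_mem hym hy0 this


lemma key (X : Set (Zar F)) (hX : X.Infinite) (hloc : IsLocalRing (ASub X))
    (hJ : jSet (limPts X) ≠ {0}) (R : Subring F) (hR : IsCIC R)
    (hAR : (ASub X : Set F) ⊆ (R : Set F)) : aSet (limPts X) ⊆ (R : Set F) := by
  intro t ht
  rw [mem_aSet] at ht
  by_cases ht0 : t = 0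
  · subst ht0
    exact R.zero_mem
  obtain ⟨a, haJ, ha0⟩ : ∃ a ∈ jSet (limPts X), a ≠ 0 := by
    by_contra h
    push_neg at h
    apply hJ
    apply Set.Subset.antisymm
    · intro z hz
      simp [h z hz]
    · intro z hz
      simp only [Set.mem_singleton_iff] at hz
      subst hz
      exact mem_jSet.mpr (fun U _ => ⟨U.1.zero_mem, Or.inl rfl⟩)
  have hsub : ∀ z : F, z ∈ jSet (limPts X) → z ≠ 0 → z ∈ R := by
    intro z hz hz0
    apply hAR
    have : z ∈ ASub X := mem_ASub.mpr (fun V hV =>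
      jset_mem_all X hX hloc hz hz0 hV)
    exact this
  refine hR t ⟨a, hsub a haJ ha0, ha0, ?_⟩
  intro n hn
  have hmem : a * t ^ n ∈ jSet (limPts X) := by
    rw [mem_jSet]
    intro U hU
    have htU : t ^ n ∈ U.1 := U.1.pow_mem (mem_aSet.mp (by rwa [mem_aSet]) U hU) n
    rw [mul_comm]
    exact mIdeal_mul htU (mem_jSet.mp haJ U hU)
  exact hsub _ hmem (mul_ne_zero ha0 (pow_ne_zero _ ht0))

end ZarProof

theorem stmt10 (X : Set (Zar F)) (hX : X.Infinite) (hloc : IsLocalRing (ASub X))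
    (hJ : jSet (limPts X) ≠ {0}) (R : Subring F) (hR : IsCIC R)
    (hAR : (ASub X : Set F) ⊆ (R : Set F)) :
    aSet (limPts X) ⊆ (R : Set F) ∧ (IsCIC (ASub X) → aSet X = aSet (limPts X)) := by
  constructor
  · exact ZarProof.key X hX hloc hJ R hR hAR
  · intro hCIC
    apply Set.Subset.antisymm
    · intro x hx
      rw [ZarProof.mem_aSet] at hx ⊢
      intro U hU
      by_contra hxU
      obtain ⟨W, hWX, _, hWU⟩ := hU _ (ZarProof.isOpen_not_mem_set x) hxU
      exact hWU (hx W hWX)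
    · intro x hx
      have hxA : x ∈ (ASub X : Set F) :=
        ZarProof.key X hX hloc hJ (ASub X) hCIC (le_refl _) hx
      rw [ZarProof.mem_aSet]
      exact fun V hV => ZarProof.mem_ASub.mp hxA V hV
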